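/- Fix a nonzero a ∈ F, d ∈ ℕ, and set θ_i = a q^{d-2i} + a⁻¹ q^{2i-d} and t_i = a^{2i} q^{2i(d-i)} for 0 ≤ i ≤ d. Then for 0 ≤ i, j ≤ d with |i - j| ≤ 1: t_j/t_i = 1 + (q θ_i² - (q + q⁻¹)θ_i θ_j + q⁻¹ θ_j²)/((q - q⁻¹)(q² - q⁻²)) and t_i/t_j = 1 + (q⁻¹ θ_i² - (q + q⁻¹)θ_i θ_j + q θ_j²)/((q - q⁻¹)(q² - q⁻²)). -/

import Mathlib

open Finset

variable {F : Type*} [Field F] {A : Type*} [Ring A] [Algebra F A]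

/-- The quantum adjoint map `ad_r a : x ↦ q^r a x - q^{-r} x a`. -/
noncomputable def qad (q : F) (a : A) (r : ℤ) (x : A) : A :=
  q ^ r • (a * x) - q ^ (-r) • (x * a)

/-- `bad_m a` : the balanced version of `ad`. -/
noncomputable def bad (q : F) (a : A) : ℕ → A → A
  | 0, x => (q - q⁻¹)⁻¹ • qad q a 0 x
  | (m + 1), x =>
      (((q ^ (2 * (m + 1) : ℤ) - q ^ (-(2 * (m + 1)) : ℤ)) *
          (q ^ (2 * (m + 1) + 1 : ℤ) - q ^ (-(2 * (m + 1)) - 1 : ℤ)))⁻¹) •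
        ((q ^ (2 * (m + 1) : ℤ) - q ^ (-(2 * (m + 1)) : ℤ)) ^ 2 • x +
          qad q a ((m : ℤ) + 1) (qad q a (-((m : ℤ) + 1)) x))

/-- `(bad a)_m = bad_{m-1} a ∘ ⋯ ∘ bad_0 a`, with `(bad a)_0 = id`. -/
noncomputable def badProd (q : F) (a : A) : ℕ → A → A
  | 0 => id
  | (m + 1) => bad q a m ∘ badProd q a m

/-- `S_m = (bad a)_m ∘ (ad_m a) / (q^{2m} - q^{-2m})`, with `S_0 = id`. -/
noncomputable def Smap (q : F) (a : A) : ℕ → A → A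
  | 0 => id
  | (m + 1) => fun x =>
      (q ^ (2 * (m + 1) : ℤ) - q ^ (-(2 * (m + 1)) : ℤ))⁻¹ •
        badProd q a (m + 1) (qad q a ((m : ℤ) + 1) x)

/-- `S'_m = (bad a)_m ∘ (ad_{-m} a) / (q^{2m} - q^{-2m})`, with `S'_0 = id`. -/
noncomputable def Smap' (q : F) (a : A) : ℕ → A → A
  | 0 => id
  | (m + 1) => fun x =>
      (q ^ (2 * (m + 1) : ℤ) - q ^ (-(2 * (m + 1)) : ℤ))⁻¹ •
        badProd q a (m + 1) (qad q a (-((m : ℤ) + 1)) x)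

lemma aux1 (q a x : F) (hq : q ≠ 0) (ha : a ≠ 0) (hx : x ≠ 0)
    (h1 : q - q⁻¹ ≠ 0) (h2 : q^2 - (q^2)⁻¹ ≠ 0) :
    a^2*x^2*(q^2)⁻¹ = 1 + (q*(a*x+a⁻¹*x⁻¹)^2 - (q+q⁻¹)*(a*x+a⁻¹*x⁻¹)*(a*x*(q^2)⁻¹+a⁻¹*x⁻¹*q^2)
      + q⁻¹*(a*x*(q^2)⁻¹+a⁻¹*x⁻¹*q^2)^2) / ((q-q⁻¹)*(q^2-(q^2)⁻¹)) := by
  have hA : a * a⁻¹ = 1 := mul_inv_cancel₀ ha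
  have hX : x * x⁻¹ = 1 := mul_inv_cancel₀ hx
  have hQ : q * q⁻¹ = 1 := mul_inv_cancel₀ hq
  have hD : (q-q⁻¹)*(q^2-(q^2)⁻¹) ≠ 0 := mul_ne_zero h1 h2
  have key : (a^2*x^2*(q^2)⁻¹ - 1) * ((q-q⁻¹)*(q^2-(q^2)⁻¹)) =
      q*(a*x+a⁻¹*x⁻¹)^2 - (q+q⁻¹)*(a*x+a⁻¹*x⁻¹)*(a*x*(q^2)⁻¹+a⁻¹*x⁻¹*q^2)
      + q⁻¹*(a*x*(q^2)⁻¹+a⁻¹*x⁻¹*q^2)^2 := by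
    simp only [← inv_pow]
    linear_combination (x*x⁻¹*q⁻¹^3 + ((-2):F)*x*x⁻¹*q + x*x⁻¹*q*q⁻¹^2 + x*x⁻¹*q^2*q⁻¹
        + ((-2):F)*x*x⁻¹*q^2*q⁻¹^3 + x*x⁻¹*q^3) * hA
      + (q⁻¹^3 + ((-2):F)*q + q*q⁻¹^2 + q^2*q⁻¹ + ((-2):F)*q^2*q⁻¹^3 + q^3) * hX
      + ((2:F)*q + ((-2):F)*q*q⁻¹^2 + a⁻¹^2*x⁻¹^2*q + ((-1):F)*a⁻¹^2*x⁻¹^2*q^3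
        + ((-1):F)*a^2*x^2*q⁻¹^3 + a^2*x^2*q + ((-1):F)*a^2*x^2*q*q⁻¹^2 + a^2*x^2*q^2*q⁻¹) * hQ
  rw [← key, mul_div_cancel_right₀ _ hD]
  ring

lemma aux2 (q a x : F) (hq : q ≠ 0) (ha : a ≠ 0) (hx : x ≠ 0)
    (h1 : q - q⁻¹ ≠ 0) (h2 : q^2 - (q^2)⁻¹ ≠ 0) :
    a⁻¹^2*x⁻¹^2*q^2 = 1 + (q⁻¹*(a*x+a⁻¹*x⁻¹)^2 - (q+q⁻¹)*(a*x+a⁻¹*x⁻¹)*(a*x*(q^2)⁻¹+a⁻¹*x⁻¹*q^2)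
      + q*(a*x*(q^2)⁻¹+a⁻¹*x⁻¹*q^2)^2) / ((q-q⁻¹)*(q^2-(q^2)⁻¹)) := by
  have hA : a * a⁻¹ = 1 := mul_inv_cancel₀ ha
  have hX : x * x⁻¹ = 1 := mul_inv_cancel₀ hx
  have hQ : q * q⁻¹ = 1 := mul_inv_cancel₀ hq
  have hD : (q-q⁻¹)*(q^2-(q^2)⁻¹) ≠ 0 := mul_ne_zero h1 h2
  have key : (a⁻¹^2*x⁻¹^2*q^2 - 1) * ((q-q⁻¹)*(q^2-(q^2)⁻¹)) =
      q⁻¹*(a*x+a⁻¹*x⁻¹)^2 - (q+q⁻¹)*(a*x+a⁻¹*x⁻¹)*(a*x*(q^2)⁻¹+a⁻¹*x⁻¹*q^2)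
      + q*(a*x*(q^2)⁻¹+a⁻¹*x⁻¹*q^2)^2 := by
    simp only [← inv_pow]
    linear_combination (((-2):F)*x*x⁻¹*q⁻¹ + x*x⁻¹*q⁻¹^3 + x*x⁻¹*q*q⁻¹^2 + x*x⁻¹*q^2*q⁻¹
        + x*x⁻¹*q^3 + ((-2):F)*x*x⁻¹*q^3*q⁻¹^2) * hA
      + (((-2):F)*q⁻¹ + q⁻¹^3 + q*q⁻¹^2 + q^2*q⁻¹ + q^3 + ((-2):F)*q^3*q⁻¹^2) * hX
      + ((2:F)*q⁻¹ + ((-2):F)*q^2*q⁻¹ + a⁻¹^2*x⁻¹^2*q⁻¹ + a⁻¹^2*x⁻¹^2*q*q⁻¹^2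
        + ((-1):F)*a⁻¹^2*x⁻¹^2*q^2*q⁻¹ + ((-1):F)*a⁻¹^2*x⁻¹^2*q^3 + a^2*x^2*q⁻¹
        + ((-1):F)*a^2*x^2*q⁻¹^3) * hQ
  rw [← key, mul_div_cancel_right₀ _ hD]
  ring

theorem stmt16 (q : F) (hq : q ≠ 0) (hroot : ∀ n : ℕ, 0 < n → q ^ n ≠ 1) (a : F) (ha : a ≠ 0) (d : ℕ)
    (θ t : ℕ → F)
    (hθ : ∀ i, θ i = a * q ^ ((d : ℤ) - 2 * i) + a⁻¹ * q ^ (2 * (i : ℤ) - d))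
    (ht : ∀ i, t i = a ^ (2 * (i : ℤ)) * q ^ (2 * (i : ℤ) * ((d : ℤ) - i)))
    (i j : ℕ) (hi : i ≤ d) (hj : j ≤ d) (hij : ((i : ℤ) - j).natAbs ≤ 1) :
    t j / t i = 1 + (q * θ i ^ 2 - (q + q⁻¹) * θ i * θ j + q⁻¹ * θ j ^ 2) /
        ((q - q⁻¹) * (q ^ (2 : ℤ) - q ^ (-2 : ℤ))) ∧
    t i / t j = 1 + (q⁻¹ * θ i ^ 2 - (q + q⁻¹) * θ i * θ j + q * θ j ^ 2) /
        ((q - q⁻¹) * (q ^ (2 : ℤ) - q ^ (-2 : ℤ))) := by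
  have h1 : q - q⁻¹ ≠ 0 := by
    have e : q - q⁻¹ = (q^2 - 1) * q⁻¹ := by field_simp
    rw [e]
    exact mul_ne_zero (sub_ne_zero.mpr (hroot 2 two_pos)) (inv_ne_zero hq)
  have hq2 : (q:F)^2 ≠ 0 := pow_ne_zero 2 hq
  have h2 : q^2 - (q^2)⁻¹ ≠ 0 := by
    have e : q^2 - (q^2)⁻¹ = ((q^2)^2 - 1) * (q^2)⁻¹ := by field_simp
    have h4 : (q^2)^2 ≠ 1 := by rw [← pow_mul]; exact hroot 4 (by norm_num)
    rw [e]
    exact mul_ne_zero (sub_ne_zero.mpr h4) (inv_ne_zero hq2)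
  have z1 : q^(2:ℤ) = q^2 := by
    rw [show (2:ℤ) = ((2:ℕ):ℤ) from rfl, zpow_natCast]
  have z2 : q^(-2:ℤ) = (q^2)⁻¹ := by
    rw [show (-2:ℤ) = -(2:ℤ) from rfl, zpow_neg, z1]
  rw [z1, z2]
  have htne : ∀ k : ℕ, t k ≠ 0 := fun k => by
    rw [ht]; exact mul_ne_zero (zpow_ne_zero _ ha) (zpow_ne_zero _ hq)
  have hcase : j = i ∨ j = i + 1 ∨ i = j + 1 := by omega
  rcases hcase with h | h | h
  · subst h
    constructor
    · rw [div_self (htne j),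
        show (q * θ j ^ 2 - (q + q⁻¹) * θ j * θ j + q⁻¹ * θ j ^ 2) = 0 from by ring,
        zero_div, add_zero]
    · rw [div_self (htne j),
        show (q⁻¹ * θ j ^ 2 - (q + q⁻¹) * θ j * θ j + q * θ j ^ 2) = 0 from by ring,
        zero_div, add_zero]
  · subst h
    set x := q ^ ((d:ℤ) - 2*i) with hxdef
    have hx : x ≠ 0 := zpow_ne_zero _ hq
    have hθi : θ i = a*x + a⁻¹*x⁻¹ := by
      rw [hθ, show (2*(i:ℤ) - d) = -((d:ℤ) - 2*i) by ring, zpow_neg]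
    have hθj : θ (i+1) = a*x*(q^2)⁻¹ + a⁻¹*x⁻¹*q^2 := by
      rw [hθ]
      push_cast
      rw [show (d:ℤ) - 2*((i:ℤ)+1) = ((d:ℤ) - 2*(i:ℤ)) + -(2:ℤ) by ring,
        show 2*((i:ℤ)+1) - (d:ℤ) = -((d:ℤ) - 2*(i:ℤ)) + (2:ℤ) by ring,
        zpow_add₀ hq, zpow_add₀ hq, zpow_neg, zpow_neg, z1, ← hxdef]
      ring
    have hr : t (i+1) / t i = a^2*x^2*(q^2)⁻¹ := by
      rw [ht, ht, mul_div_mul_comm, ← zpow_sub₀ ha, ← zpow_sub₀ hq]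
      push_cast
      rw [show 2*((i:ℤ)+1) - 2*(i:ℤ) = (2:ℤ) by ring,
        show 2*((i:ℤ)+1)*((d:ℤ) - ((i:ℤ)+1)) - 2*(i:ℤ)*((d:ℤ) - (i:ℤ))
          = (((d:ℤ) - 2*(i:ℤ)) + (((d:ℤ) - 2*(i:ℤ)) + -(2:ℤ))) by ring,
        zpow_add₀ hq, zpow_add₀ hq, zpow_neg, z1, ← hxdef,
        show (2:ℤ) = ((2:ℕ):ℤ) from rfl, zpow_natCast]
      ring
    have hr2 : t i / t (i+1) = a⁻¹^2*x⁻¹^2*q^2 := by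
      rw [← inv_div, hr, mul_inv, mul_inv, inv_inv, ← inv_pow, ← inv_pow]
    constructor
    · rw [hr, hθi, hθj]
      exact aux1 q a x hq ha hx h1 h2
    · rw [hr2, hθi, hθj]
      exact aux2 q a x hq ha hx h1 h2
  · subst h
    set x := q ^ ((d:ℤ) - 2*j) with hxdef
    have hx : x ≠ 0 := zpow_ne_zero _ hq
    have hθj : θ j = a*x + a⁻¹*x⁻¹ := by
      rw [hθ, show (2*(j:ℤ) - d) = -((d:ℤ) - 2*j) by ring, zpow_neg]
    have hθi : θ (j+1) = a*x*(q^2)⁻¹ + a⁻¹*x⁻¹*q^2 := by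
      rw [hθ]
      push_cast
      rw [show (d:ℤ) - 2*((j:ℤ)+1) = ((d:ℤ) - 2*(j:ℤ)) + -(2:ℤ) by ring,
        show 2*((j:ℤ)+1) - (d:ℤ) = -((d:ℤ) - 2*(j:ℤ)) + (2:ℤ) by ring,
        zpow_add₀ hq, zpow_add₀ hq, zpow_neg, zpow_neg, z1, ← hxdef]
      ring
    have hr : t (j+1) / t j = a^2*x^2*(q^2)⁻¹ := by
      rw [ht, ht, mul_div_mul_comm, ← zpow_sub₀ ha, ← zpow_sub₀ hq]
      push_cast
      rw [show 2*((j:ℤ)+1) - 2*(j:ℤ) = (2:ℤ) by ring,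
        show 2*((j:ℤ)+1)*((d:ℤ) - ((j:ℤ)+1)) - 2*(j:ℤ)*((d:ℤ) - (j:ℤ))
          = (((d:ℤ) - 2*(j:ℤ)) + (((d:ℤ) - 2*(j:ℤ)) + -(2:ℤ))) by ring,
        zpow_add₀ hq, zpow_add₀ hq, zpow_neg, z1, ← hxdef,
        show (2:ℤ) = ((2:ℕ):ℤ) from rfl, zpow_natCast]
      ring
    have hr2 : t j / t (j+1) = a⁻¹^2*x⁻¹^2*q^2 := by
      rw [← inv_div, hr, mul_inv, mul_inv, inv_inv, ← inv_pow, ← inv_pow]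
    constructor
    · rw [hr2, hθi, hθj]
      linear_combination aux2 q a x hq ha hx h1 h2
    · rw [hr, hθi, hθj]
      linear_combination aux1 q a x hq ha hx h1 h2
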